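/- Let N > 1 and p, q > 0 be real numbers. Then the value ((1 + √N)/(N − 1))² · p · q is the least element of the set { E_x · E_y : E_x > 0, E_y > 0, E_x · E_y · N ≥ (p + E_x) · (q + E_y) } ⊆ ℝ; i.e., it belongs to this set (attained at E_x = ((1+√N)/(N−1))·p and E_y = ((1+√N)/(N−1))·q) and is a lower bound for it. -/

import Mathlib

/-- **Smallest annihilating-kernel area (paper's eq. (2)).**
For `N > 1` and `p, q > 0`, the value `((1 + √N)/(N − 1))² · p · q` is the
least element of `{ E_x E_y : E_x > 0, E_y > 0, E_x E_y N ≥ (p + E_x)(q + E_y) }`,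
attained at `E_x = ((1 + √N)/(N − 1)) p`, `E_y = ((1 + √N)/(N − 1)) q`. -/
theorem kernel_area_isLeast
    (N p q : ℝ) (hN : 1 < N) (hp : 0 < p) (hq : 0 < q) :
    IsLeast
      { A : ℝ | ∃ Ex Ey : ℝ, 0 < Ex ∧ 0 < Ey ∧
          Ex * Ey * N ≥ (p + Ex) * (q + Ey) ∧ A = Ex * Ey }
      (((1 + Real.sqrt N) / (N - 1)) ^ 2 * p * q) ∧
    (((1 + Real.sqrt N) / (N - 1)) ^ 2 * p * q =
      ((1 + Real.sqrt N) / (N - 1) * p) * ((1 + Real.sqrt N) / (N - 1) * q)) := by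
  set s := Real.sqrt N with hsdef
  have hN0 : (0:ℝ) ≤ N := by linarith
  have hs2 : s ^ 2 = N := Real.sq_sqrt hN0
  have hs0 : 0 ≤ s := Real.sqrt_nonneg N
  have hs1 : 1 < s := by nlinarith
  have hsm : 0 < s - 1 := by linarith
  have hc : (1 + s) / (N - 1) = 1 / (s - 1) := by
    rw [div_eq_div_iff (by linarith) (by linarith)]
    nlinarith
  refine ⟨⟨⟨(1 + s) / (N - 1) * p, (1 + s) / (N - 1) * q, ?_, ?_, ?_, by ring⟩, ?_⟩, by ring⟩
  · rw [hc]; positivity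
  · rw [hc]; positivity
  · rw [hc]
    have : (1 / (s - 1) * p) * (1 / (s - 1) * q) * N
        = (p + 1 / (s - 1) * p) * (q + 1 / (s - 1) * q) := by
      field_simp
      linear_combination hs2.symm
    exact this.ge
  · rintro A ⟨Ex, Ey, hEx, hEy, hineq, rfl⟩
    rw [hc]
    set t := Real.sqrt (Ex * Ey) with htdef
    set m := Real.sqrt (p * q) with hmdef
    have ht2 : t ^ 2 = Ex * Ey := Real.sq_sqrt (by positivity)
    have hm2 : m ^ 2 = p * q := Real.sq_sqrt (by positivity)
    have ht0 : 0 ≤ t := Real.sqrt_nonneg _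
    have hm0 : 0 < m := Real.sqrt_pos.mpr (by positivity)
    have hprod : Real.sqrt (p * Ey) * Real.sqrt (q * Ex) = m * t := by
      rw [← Real.sqrt_mul (by positivity), hmdef, htdef,
        ← Real.sqrt_mul (by positivity)]
      ring_nf
    have hAM : 2 * m * t ≤ p * Ey + q * Ex := by
      nlinarith [sq_nonneg (Real.sqrt (p * Ey) - Real.sqrt (q * Ex)),
        Real.sq_sqrt (le_of_lt (mul_pos hp hEy)),
        Real.sq_sqrt (le_of_lt (mul_pos hq hEx)), hprod]
    have hsq : (m + t) ^ 2 ≤ (t * s) ^ 2 := by nlinarith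
    have hpos : 0 < m + t + t * s := by nlinarith [mul_nonneg ht0 hs0]
    have hkey : m + t ≤ t * s := by nlinarith [hsq, hpos]
    have hmt : m ≤ t * (s - 1) := by nlinarith
    have hfin : m ^ 2 ≤ t ^ 2 * (s - 1) ^ 2 := by
      calc m ^ 2 ≤ (t * (s - 1)) ^ 2 := pow_le_pow_left₀ hm0.le hmt 2
        _ = t ^ 2 * (s - 1) ^ 2 := by ring
    rw [hm2, ht2] at hfin
    have hpos2 : 0 < (s - 1) ^ 2 := by positivity
    have heq : (1 / (s - 1)) ^ 2 * p * q = p * q / (s - 1) ^ 2 := by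
      rw [div_pow, one_pow, div_mul_eq_mul_div, div_mul_eq_mul_div, one_mul]
    rw [heq, div_le_iff₀ hpos2]
    linarith
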